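/- For integers k_1,...,k_r ≥ 1 and integers n ≥ r ≥ 1, the multi-Lah numbers satisfy L^{(k_1,...,k_r)}(n,r) = Σ_{l=r}^{n} Σ_{m=r}^{l} S_1^{(k_1,...,k_r)}(m,r) · (−1)^{m−l} · S_2(l,m) · binom(r+n−l−1, n−l) · n!/l!, where S_2 are the Stirling numbers of the second kind. -/

import Mathlib

open scoped Classical in
/-- The coefficient of `z^n` in the multiple logarithm
`Li_{k_1,...,k_r}(z) = Σ_{0<m_1<⋯<m_r} z^{m_r}/(m_1^{k_1}⋯m_r^{k_r})`, i.e.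
`Σ_{0<m_1<⋯<m_{r-1}<m_r=n} 1/(m_1^{k_1}⋯m_r^{k_r})` (integer indices allowed; for a strictly
increasing positive tuple, `m_r` is the supremum of its entries). -/
noncomputable def liCoeff (r : ℕ) (k : Fin r → ℤ) (n : ℕ) : ℚ :=
  ∑ m : Fin r → Fin (n + 1),
    if StrictMono m ∧ (∀ i, 0 < m i) ∧ (Finset.univ.sup fun i => (m i : ℕ)) = n then
      (∏ i, ((m i : ℕ) : ℚ) ^ (k i))⁻¹
    else 0

/-- Multi-Stirling numbers of the first kind:
`S_1^{(k_1,...,k_r)}(n,r) = n! ⬝ Σ_{0<m_1<⋯<m_{r-1}<n} 1/(m_1^{k_1}⋯m_{r-1}^{k_{r-1}} n^{k_r})`,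
so that `Li_{k_1,...,k_r}(t) = Σ_{n≥r} S_1^{(k_1,...,k_r)}(n,r) t^n/n!`. -/
noncomputable def multiStirling1 (r : ℕ) (k : Fin r → ℕ) (n : ℕ) : ℚ :=
  (n.factorial : ℚ) * liCoeff r (fun i => (k i : ℤ)) n

/-- The formal power series `1 - e^{-t} ∈ ℚ⟦t⟧`. -/
noncomputable def oneSubExpNeg : PowerSeries ℚ :=
  1 - PowerSeries.rescale (-1) (PowerSeries.exp ℚ)

/-- Multi-Lah numbers, defined by the formal power series identity
`Σ_{n≥r} L^{(k_1,...,k_r)}(n,r) t^n/n! = Li_{k_1,...,k_r}(1-e^{-t})/(1-t)^r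
  = (1-t)^{-r} ⬝ Σ_{m} liCoeff(m) (1-e^{-t})^m` in `ℚ⟦t⟧` (integer indices allowed).
Since `(1-e^{-t})^m` has order `≥ m`, the `n`-th coefficient of the series only involves the
(finitely many) terms with `m ≤ n`, so the infinite sum may be truncated exactly. -/
noncomputable def multiLah (r : ℕ) (k : Fin r → ℤ) (n : ℕ) : ℚ :=
  (n.factorial : ℚ) *
    PowerSeries.coeff n
      (((1 - PowerSeries.X : PowerSeries ℚ) ^ r)⁻¹ *
        ∑ m ∈ Finset.range (n + 1), liCoeff r k m • oneSubExpNeg ^ m)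

/-- Stirling numbers of the second kind, defined by `(e^t-1)^j/j! = Σ_{n≥j} S_2(n,j) t^n/n!`. -/
noncomputable def stirling2 (n j : ℕ) : ℚ :=
  (n.factorial : ℚ) / j.factorial * PowerSeries.coeff n ((PowerSeries.exp ℚ - 1) ^ j)


open PowerSeries in
lemma inv_one_sub_pow_eq (r : ℕ) (hr : 1 ≤ r) :
    ((1 - X : PowerSeries ℚ) ^ r)⁻¹ = mk fun j => ((r - 1 + j).choose (r - 1) : ℚ) := by
  rw [PowerSeries.inv_eq_iff_mul_eq_one]
  · rw [← invOneSubPow_val_eq_mk_sub_one_add_choose_of_pos ℚ r hr,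
      ← invOneSubPow_inv_eq_one_sub_pow]
    exact (invOneSubPow ℚ r).val_inv
  · simp

open PowerSeries in
lemma coeff_expSub_pow_eq_zero {l m : ℕ} (h : l < m) :
    PowerSeries.coeff l ((PowerSeries.exp ℚ - 1) ^ m) = 0 := by
  have hX : (X : PowerSeries ℚ) ∣ (PowerSeries.exp ℚ - 1) := by
    rw [PowerSeries.X_dvd_iff]; simp
  obtain ⟨g, hg⟩ : (X : PowerSeries ℚ) ^ m ∣ (PowerSeries.exp ℚ - 1) ^ m :=
    pow_dvd_pow_of_dvd hX m
  rw [hg, mul_comm, PowerSeries.coeff_mul_X_pow', if_neg (by omega)]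

open PowerSeries in
lemma coeff_oneSubExpNeg_pow (m l : ℕ) :
    PowerSeries.coeff l (oneSubExpNeg ^ m) =
      (-1 : ℚ) ^ (m + l) * PowerSeries.coeff l ((PowerSeries.exp ℚ - 1) ^ m) := by
  have h1 : oneSubExpNeg = -(rescale (-1) (PowerSeries.exp ℚ - 1)) := by
    unfold oneSubExpNeg
    rw [map_sub, map_one]; ring
  rw [h1, neg_pow, ← map_pow, show ((-1 : PowerSeries ℚ)) ^ m = C ((-1 : ℚ) ^ m) by
    rw [map_pow, map_neg, map_one]]
  rw [PowerSeries.coeff_C_mul, PowerSeries.coeff_rescale]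
  ring

lemma liCoeff_eq_zero (r : ℕ) (k : Fin r → ℤ) {m : ℕ} (h : m < r) :
    liCoeff r k m = 0 := by
  unfold liCoeff
  apply Finset.sum_eq_zero
  intro f _
  rw [if_neg]
  rintro ⟨hsm, hpos, -⟩
  have hsub : Finset.univ.image f ⊆ (Finset.univ.erase (0 : Fin (m + 1))) := by
    intro x hx
    simp only [Finset.mem_image, Finset.mem_univ, true_and] at hx
    obtain ⟨i, rfl⟩ := hx
    exact Finset.mem_erase.mpr ⟨(hpos i).ne', Finset.mem_univ _⟩
  have hc := Finset.card_le_card hsub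
  rw [Finset.card_image_of_injective _ hsm.injective,
    Finset.card_erase_of_mem (Finset.mem_univ _), Finset.card_univ, Finset.card_univ] at hc
  simp only [Fintype.card_fin] at hc
  omega

/-- For integers `k_1,...,k_r ≥ 1` and `n ≥ r ≥ 1`, the multi-Lah numbers satisfy
`L^{(k_1,...,k_r)}(n,r) = Σ_{l=r}^{n} Σ_{m=r}^{l} S_1^{(k_1,...,k_r)}(m,r) ⬝ (−1)^{m−l}
  ⬝ S_2(l,m) ⬝ C(r+n−l−1, n−l) ⬝ n!/l!`. -/
theorem multiLah_eq_sum_multiStirling1 (r : ℕ) (hr : 1 ≤ r) (k : Fin r → ℕ)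
    (hk : ∀ i, 1 ≤ k i) (n : ℕ) (hn : r ≤ n) :
    multiLah r (fun i => (k i : ℤ)) n =
      ∑ l ∈ Finset.Icc r n, ∑ m ∈ Finset.Icc r l,
        multiStirling1 r k m * (-1 : ℚ) ^ ((m : ℤ) - (l : ℤ)) * stirling2 l m *
          ((r + n - l - 1).choose (n - l) : ℚ) * ((n.factorial : ℚ) / (l.factorial : ℚ)) := by
  have hfac : ∀ j : ℕ, (j.factorial : ℚ) ≠ 0 := fun j => Nat.cast_ne_zero.mpr j.factorial_ne_zero
  have step1 : multiLah r (fun i => (k i : ℤ)) n =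
      ∑ l ∈ Finset.range (n + 1), ∑ m ∈ Finset.range (n + 1),
        liCoeff r (fun i => (k i : ℤ)) m * (-1 : ℚ) ^ (m + l) *
          PowerSeries.coeff l ((PowerSeries.exp ℚ - 1) ^ m) *
          ((r - 1 + (n - l)).choose (r - 1) : ℚ) * (n.factorial : ℚ) := by
    unfold multiLah
    rw [inv_one_sub_pow_eq r hr, mul_comm (PowerSeries.mk _),
      PowerSeries.coeff_mul, Finset.Nat.sum_antidiagonal_eq_sum_range_succ_mk,
      Finset.mul_sum]
    refine Finset.sum_congr rfl fun l hl => ?_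
    rw [map_sum, Finset.sum_mul, Finset.mul_sum]
    refine Finset.sum_congr rfl fun m hm => ?_
    rw [LinearMap.map_smul, smul_eq_mul, coeff_oneSubExpNeg_pow, PowerSeries.coeff_mk]
    ring
  rw [step1]
  have step2 : (∑ l ∈ Finset.range (n + 1), ∑ m ∈ Finset.range (n + 1),
        liCoeff r (fun i => (k i : ℤ)) m * (-1 : ℚ) ^ (m + l) *
          PowerSeries.coeff l ((PowerSeries.exp ℚ - 1) ^ m) *
          ((r - 1 + (n - l)).choose (r - 1) : ℚ) * (n.factorial : ℚ)) =
      ∑ l ∈ Finset.Icc r n, ∑ m ∈ Finset.Icc r l,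
        liCoeff r (fun i => (k i : ℤ)) m * (-1 : ℚ) ^ (m + l) *
          PowerSeries.coeff l ((PowerSeries.exp ℚ - 1) ^ m) *
          ((r - 1 + (n - l)).choose (r - 1) : ℚ) * (n.factorial : ℚ) := by
    have inner : ∀ l ∈ Finset.range (n + 1),
        (∑ m ∈ Finset.range (n + 1),
          liCoeff r (fun i => (k i : ℤ)) m * (-1 : ℚ) ^ (m + l) *
            PowerSeries.coeff l ((PowerSeries.exp ℚ - 1) ^ m) *
            ((r - 1 + (n - l)).choose (r - 1) : ℚ) * (n.factorial : ℚ)) =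
        ∑ m ∈ Finset.Icc r l,
          liCoeff r (fun i => (k i : ℤ)) m * (-1 : ℚ) ^ (m + l) *
            PowerSeries.coeff l ((PowerSeries.exp ℚ - 1) ^ m) *
            ((r - 1 + (n - l)).choose (r - 1) : ℚ) * (n.factorial : ℚ) := by
      intro l hl
      rw [Finset.mem_range] at hl
      refine (Finset.sum_subset (fun m hm => ?_) (fun m hm hm' => ?_)).symm
      · rw [Finset.mem_Icc] at hm
        rw [Finset.mem_range]
        omega
      · rw [Finset.mem_Icc] at hm'
        rcases not_and_or.mp hm' with h | h
        · rw [liCoeff_eq_zero r _ (by omega)]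
          ring
        · rw [coeff_expSub_pow_eq_zero (by omega)]
          ring
    rw [Finset.sum_congr rfl inner]
    refine (Finset.sum_subset (fun l hl => ?_) (fun l hl hl' => ?_)).symm
    · rw [Finset.mem_Icc] at hl
      rw [Finset.mem_range]
      omega
    · rw [Finset.mem_range] at hl
      rw [Finset.mem_Icc] at hl'
      rw [Finset.Icc_eq_empty (by omega), Finset.sum_empty]
  rw [step2]
  refine Finset.sum_congr rfl fun l hl => Finset.sum_congr rfl fun m hm => ?_
  rw [Finset.mem_Icc] at hl hm
  unfold multiStirling1 stirling2
  have hz : (-1 : ℚ) ^ ((m : ℤ) - (l : ℤ)) = (-1 : ℚ) ^ (m + l) := by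
    have h2 : ((-1 : ℚ) ^ l)⁻¹ = (-1 : ℚ) ^ l :=
      inv_eq_of_mul_eq_one_left (by rw [← mul_pow]; norm_num)
    rw [zpow_sub₀ (by norm_num : (-1 : ℚ) ≠ 0), zpow_natCast, zpow_natCast, div_eq_mul_inv,
      h2, pow_add]
  have hch : (r + n - l - 1).choose (n - l) = (r - 1 + (n - l)).choose (r - 1) := by
    have h1 : r + n - l - 1 = r - 1 + (n - l) := by omega
    rw [h1, ← Nat.choose_symm (Nat.le_add_right (r - 1) (n - l))]
    congr 1
    omega
  rw [hz, hch]
  field_simp
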